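/- If stochastic matrices A_k (k=1,…,l) each have all entries ≥ β_k > 0 and x^{(k)} = A_k x^{(k−1)}, then max_i x_i^{(l)} − min_i x_i^{(l)} ≤ ∏_{k=1}^l (1 − n β_k) · (max_i x_i^{(0)} − min_i x_i^{(0)}). -/
import Mathlib

lemma step_contract {n : ℕ} (hn : 0 < n) (A : Matrix (Fin n) (Fin n) ℝ) (β : ℝ)
    (hβ0 : 0 < β) (hA : ∀ i j, β ≤ A i j) (hrow : ∀ i, ∑ j, A i j = 1)
    (x : Fin n → ℝ) :
    (⨆ i, A.mulVec x i) - (⨅ i, A.mulVec x i) ≤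
      (1 - (n : ℝ) * β) * ((⨆ i, x i) - (⨅ i, x i)) := by
  haveI : Nonempty (Fin n) := Fin.pos_iff_nonempty.mp hn
  set M := ⨆ i, x i with hMdef
  set m := ⨅ i, x i with hmdef
  have hM : ∀ j, x j ≤ M := fun j => le_ciSup (Set.Finite.bddAbove (Set.finite_range x)) j
  have hm : ∀ j, m ≤ x j := fun j => ciInf_le (Set.Finite.bddBelow (Set.finite_range x)) j
  set S := ∑ j, x j with hS
  have hsum : ∀ i : Fin n, ∑ j, (A i j - β) = 1 - (n : ℝ) * β := by
    intro i
    rw [Finset.sum_sub_distrib, hrow i]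
    simp [mul_comm]
  have hup : ∀ i, A.mulVec x i ≤ β * S + (1 - (n : ℝ) * β) * M := by
    intro i
    have h1 : A.mulVec x i = β * S + ∑ j, (A i j - β) * x j := by
      simp only [Matrix.mulVec, dotProduct, hS, Finset.mul_sum,
        ← Finset.sum_add_distrib]
      congr 1; ext j; ring
    rw [h1]
    have h2 : ∑ j, (A i j - β) * x j ≤ ∑ j, (A i j - β) * M :=
      Finset.sum_le_sum fun j _ =>
        mul_le_mul_of_nonneg_left (hM j) (sub_nonneg.2 (hA i j))
    have h3 : ∑ j, (A i j - β) * M = (1 - (n : ℝ) * β) * M := by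
      rw [← Finset.sum_mul, hsum i]
    linarith
  have hlo : ∀ i, β * S + (1 - (n : ℝ) * β) * m ≤ A.mulVec x i := by
    intro i
    have h1 : A.mulVec x i = β * S + ∑ j, (A i j - β) * x j := by
      simp only [Matrix.mulVec, dotProduct, hS, Finset.mul_sum,
        ← Finset.sum_add_distrib]
      congr 1; ext j; ring
    rw [h1]
    have h2 : ∑ j, (A i j - β) * m ≤ ∑ j, (A i j - β) * x j :=
      Finset.sum_le_sum fun j _ =>
        mul_le_mul_of_nonneg_left (hm j) (sub_nonneg.2 (hA i j))
    have h3 : ∑ j, (A i j - β) * m = (1 - (n : ℝ) * β) * m := by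
      rw [← Finset.sum_mul, hsum i]
    linarith
  have hsup : (⨆ i, A.mulVec x i) ≤ β * S + (1 - (n : ℝ) * β) * M := ciSup_le hup
  have hinf : β * S + (1 - (n : ℝ) * β) * m ≤ ⨅ i, A.mulVec x i := le_ciInf hlo
  linarith

/-- Iterating row-stochastic matrices `A k` with entries at least `β k` contracts
the spread `max - min` by the factor `∏ (1 - n β k)`. -/
theorem stmt8 {n : ℕ} (hn : 0 < n) (l : ℕ) (A : ℕ → Matrix (Fin n) (Fin n) ℝ)
    (β : ℕ → ℝ) (hβ : ∀ k, 0 < β k ∧ (n : ℝ) * β k ≤ 1)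
    (hA : ∀ k i j, β k ≤ A k i j) (hrow : ∀ k i, ∑ j, A k i j = 1)
    (x : ℕ → Fin n → ℝ) (hx : ∀ k, x (k + 1) = (A (k + 1)).mulVec (x k)) :
    (⨆ i, x l i) - (⨅ i, x l i) ≤
      (∏ k ∈ Finset.Icc 1 l, (1 - (n : ℝ) * β k)) * ((⨆ i, x 0 i) - (⨅ i, x 0 i)) := by
  haveI : Nonempty (Fin n) := Fin.pos_iff_nonempty.mp hn
  induction l with
  | zero => simp
  | succ l ih =>
    have hstep : (⨆ i, x (l + 1) i) - (⨅ i, x (l + 1) i) ≤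
        (1 - (n : ℝ) * β (l + 1)) * ((⨆ i, x l i) - (⨅ i, x l i)) := by
      rw [hx l]
      exact step_contract hn _ _ (hβ (l + 1)).1 (hA (l + 1)) (hrow (l + 1)) _
    have hnn : 0 ≤ 1 - (n : ℝ) * β (l + 1) := by linarith [(hβ (l + 1)).2]
    have hprod : ∏ k ∈ Finset.Icc 1 (l + 1), (1 - (n : ℝ) * β k) =
        (∏ k ∈ Finset.Icc 1 l, (1 - (n : ℝ) * β k)) * (1 - (n : ℝ) * β (l + 1)) :=
      Finset.prod_Icc_succ_top (by omega) _
    calc (⨆ i, x (l + 1) i) - (⨅ i, x (l + 1) i)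
        ≤ (1 - (n : ℝ) * β (l + 1)) * ((⨆ i, x l i) - (⨅ i, x l i)) := hstep
      _ ≤ (1 - (n : ℝ) * β (l + 1)) *
            ((∏ k ∈ Finset.Icc 1 l, (1 - (n : ℝ) * β k)) * ((⨆ i, x 0 i) - (⨅ i, x 0 i))) :=
          mul_le_mul_of_nonneg_left ih hnn
      _ = (∏ k ∈ Finset.Icc 1 (l + 1), (1 - (n : ℝ) * β k)) * ((⨆ i, x 0 i) - (⨅ i, x 0 i)) := by
          rw [hprod]; ring
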